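/- Let 𝒞 be a finite nonempty set of pairwise disjoint compact convex sets in the plane, let S be an optimal set of k centers with radius r_opt = max_{C∈𝒞} dist(C, S) > 0, and let s ∈ S be a center such that the set 𝒞' of members of 𝒞 intersecting B(s, r_opt) has exactly one element C. Then replacing s by any point of C yields a set of k points whose radius is at most r_opt. -/
import Mathlib


open Metric Classical
noncomputable section
open scoped Classical in

theorem stmt_17
    (𝒞 : Finset (Set (EuclideanSpace ℝ (Fin 2)))) (h𝒞 : 𝒞.Nonempty)
    (hcomp : ∀ C ∈ 𝒞, IsCompact C) (hconv : ∀ C ∈ 𝒞, Convex ℝ C)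
    (hne : ∀ C ∈ 𝒞, C.Nonempty)
    (hdisj : ∀ C ∈ 𝒞, ∀ D ∈ 𝒞, C ≠ D → Disjoint C D)
    (S : Finset (EuclideanSpace ℝ (Fin 2))) (k : ℕ) (hcard : S.card = k)
    (ropt : ℝ) (hpos : 0 < ropt)
    (hcov : ∀ C ∈ 𝒞, ∃ t ∈ S, infDist t C ≤ ropt)
    (s : EuclideanSpace ℝ (Fin 2)) (hs : s ∈ S)
    (C : Set (EuclideanSpace ℝ (Fin 2))) (hC : C ∈ 𝒞)
    (hint : (closedBall s ropt ∩ C).Nonempty)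
    (huniq : ∀ D ∈ 𝒞, (closedBall s ropt ∩ D).Nonempty → D = C)
    (p : EuclideanSpace ℝ (Fin 2)) (hp : p ∈ C) :
    (insert p (S.erase s)).card ≤ k ∧
    ∀ D ∈ 𝒞, ∃ t ∈ insert p (S.erase s), infDist t D ≤ ropt := by
  constructor
  · calc (insert p (S.erase s)).card ≤ (S.erase s).card + 1 := Finset.card_insert_le _ _
      _ = (S.card - 1) + 1 := by rw [Finset.card_erase_of_mem hs]
      _ = S.card := Nat.succ_pred_eq_of_pos (Finset.card_pos.mpr ⟨s, hs⟩)
      _ = k := hcard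
  · intro D hD
    obtain ⟨t, htS, htd⟩ := hcov D hD
    by_cases hts : t = s
    · subst hts
      obtain ⟨d, hdD, hdd⟩ := IsCompact.exists_infDist_eq_dist (hcomp D hD) (hne D hD) t
      have hDC : D = C := huniq D hD
        ⟨d, by simp only [mem_closedBall]; rw [dist_comm, ← hdd]; exact htd, hdD⟩
      exact ⟨p, Finset.mem_insert_self _ _, by
        rw [hDC, infDist_zero_of_mem hp]; exact hpos.le⟩
    · exact ⟨t, Finset.mem_insert_of_mem (Finset.mem_erase.mpr ⟨hts, htS⟩), htd⟩
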